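/- Let l₀, l₁, l₂, l₃, l₄ be linear forms on ℂ⁵ forming a basis of the dual space (ℂ⁵)*. For x ∈ ℂ⁵ let T(x) be the 2×6 complex matrix with rows (l₂(x), −l₁(x), l₀(x), 0, 0, l₃(x)) and (0, 0, l₄(x), l₂(x), −l₁(x), l₀(x)). Then: (i) for every x ≠ 0 the matrix T(x) is nonzero (i.e., has rank at least 1); and (ii) T(x) has rank at most 1 if and only if l₁(x) = 0, l₂(x) = 0, and l₃(x)·l₄(x) = l₀(x)². -/

import Mathlib

open Matrix




open Matrix Module Submodule

lemma aux_cons5 (a b c d e f : ℂ) : ![a,b,c,d,e,f] 5 = f := rfl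

lemma aux_span_singleton_le {n : ℕ} (v : Fin n → ℂ) :
    finrank ℂ (Submodule.span ℂ ({v} : Set (Fin n → ℂ))) ≤ 1 := by
  by_cases hv : v = 0
  · rw [hv, Submodule.span_zero_singleton]; simp
  · rw [finrank_span_singleton hv]

lemma aux_rank_le_one {n : ℕ} (A : Matrix (Fin 2) (Fin n) ℂ) :
    A.rank ≤ 1 ↔ ∀ i j, A 0 i * A 1 j = A 0 j * A 1 i := by
  constructor
  · intro h i j
    by_contra hne
    have hli : LinearIndependent ℂ A := by
      refine Fintype.linearIndependent_iff.mpr ?_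
      intro g hg
      have h0 : g 0 * A 0 i + g 1 * A 1 i = 0 := by
        have := congrFun hg i
        simpa [Fin.sum_univ_two, Pi.add_apply] using this
      have h1 : g 0 * A 0 j + g 1 * A 1 j = 0 := by
        have := congrFun hg j
        simpa [Fin.sum_univ_two, Pi.add_apply] using this
      have hd : A 0 i * A 1 j - A 0 j * A 1 i ≠ 0 := sub_ne_zero.mpr hne
      have hg0 : g 0 = 0 := by
        have hz : g 0 * (A 0 i * A 1 j - A 0 j * A 1 i) = 0 := by
          linear_combination A 1 j * h0 - A 1 i * h1
        exact (mul_eq_zero.mp hz).resolve_right hd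
      have hg1 : g 1 = 0 := by
        have hz : g 1 * (A 0 i * A 1 j - A 0 j * A 1 i) = 0 := by
          linear_combination A 0 i * h1 - A 0 j * h0
        exact (mul_eq_zero.mp hz).resolve_right hd
      intro t; fin_cases t <;> assumption
    have h2 := hli.rank_matrix
    simp [Fintype.card_fin] at h2
    omega
  · intro hm
    rw [rank_eq_finrank_span_row]
    by_cases h0 : A 0 = 0
    · have hsub : Set.range A ⊆ (Submodule.span ℂ ({A 1} : Set (Fin n → ℂ)) : Set _) := by
        rintro _ ⟨t, rfl⟩
        fin_cases t
        · show A 0 ∈ _; rw [h0]; exact Submodule.zero_mem _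
        · show A 1 ∈ _; exact Submodule.subset_span rfl
      exact le_trans (Submodule.finrank_mono (Submodule.span_le.mpr hsub))
        (aux_span_singleton_le _)
    · obtain ⟨k, hk⟩ : ∃ k, A 0 k ≠ 0 := by
        by_contra hall
        push_neg at hall
        exact h0 (funext hall)
      have hA1 : A 1 = (A 1 k / A 0 k) • A 0 := by
        funext j
        have := hm k j
        rw [Pi.smul_apply, smul_eq_mul, div_mul_eq_mul_div, eq_div_iff hk]
        linear_combination this
      have hsub : Set.range A ⊆ (Submodule.span ℂ ({A 0} : Set (Fin n → ℂ)) : Set _) := by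
        rintro _ ⟨t, rfl⟩
        fin_cases t
        · show A 0 ∈ _; exact Submodule.subset_span rfl
        · show A 1 ∈ _; rw [hA1]; exact Submodule.smul_mem _ _ (Submodule.subset_span rfl)
      exact le_trans (Submodule.finrank_mono (Submodule.span_le.mpr hsub))
        (aux_span_singleton_le _)

lemma aux_one_le_rank {m n : ℕ} (A : Matrix (Fin m) (Fin n) ℂ) (i : Fin m) (j : Fin n)
    (h : A i j ≠ 0) : 1 ≤ A.rank := by
  rw [Matrix.rank_eq_finrank_span_row]
  have hi : A i ≠ 0 := fun hz => h (by rw [hz]; rfl)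
  calc 1 = Module.finrank ℂ (Submodule.span ℂ ({A i} : Set (Fin n → ℂ))) :=
        (finrank_span_singleton hi).symm
    _ ≤ _ := Submodule.finrank_mono
        (Submodule.span_mono (Set.singleton_subset_iff.mpr (Set.mem_range_self i)))

/-- Lemma 3.3, rank-locus computation: for linear forms `l₀, …, l₄` forming a basis of
the dual of `ℂ⁵` and
`T(x) = ((l₂(x), −l₁(x), l₀(x), 0, 0, l₃(x)), (0, 0, l₄(x), l₂(x), −l₁(x), l₀(x)))`,
(i) `T(x)` is nonzero (rank ≥ 1) for all `x ≠ 0`, and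
(ii) `rank T(x) ≤ 1` iff `l₁(x) = 0`, `l₂(x) = 0` and `l₃(x)·l₄(x) = l₀(x)²`. -/
theorem stmt_18 (l₀ l₁ l₂ l₃ l₄ : Module.Dual ℂ (Fin 5 → ℂ))
    (hind : LinearIndependent ℂ ![l₀, l₁, l₂, l₃, l₄])
    (hspan : Submodule.span ℂ {l₀, l₁, l₂, l₃, l₄} = ⊤) :
    (∀ x : Fin 5 → ℂ, x ≠ 0 →
      1 ≤ (!![l₂ x, -l₁ x, l₀ x, 0, 0, l₃ x;
              0, 0, l₄ x, l₂ x, -l₁ x, l₀ x] : Matrix (Fin 2) (Fin 6) ℂ).rank) ∧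
    (∀ x : Fin 5 → ℂ,
      (!![l₂ x, -l₁ x, l₀ x, 0, 0, l₃ x;
          0, 0, l₄ x, l₂ x, -l₁ x, l₀ x] : Matrix (Fin 2) (Fin 6) ℂ).rank ≤ 1 ↔
        (l₁ x = 0 ∧ l₂ x = 0 ∧ l₃ x * l₄ x = l₀ x ^ 2)) := by
  have key : ∀ x : Fin 5 → ℂ, l₀ x = 0 → l₁ x = 0 → l₂ x = 0 → l₃ x = 0 → l₄ x = 0 → x = 0 := by
    intro x h0 h1 h2 h3 h4
    have hker : Submodule.span ℂ {l₀, l₁, l₂, l₃, l₄} ≤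
        LinearMap.ker ((Module.Dual.eval ℂ (Fin 5 → ℂ)) x) := by
      rw [Submodule.span_le]
      rintro f hf
      simp only [Set.mem_insert_iff, Set.mem_singleton_iff] at hf
      rcases hf with rfl | rfl | rfl | rfl | rfl <;>
        simp [LinearMap.mem_ker, Module.Dual.eval, h0, h1, h2, h3, h4]
    rw [hspan] at hker
    have hall : ∀ f : Module.Dual ℂ (Fin 5 → ℂ), f x = 0 := fun f => hker Submodule.mem_top
    funext i
    exact hall (LinearMap.proj i)
  constructor
  · intro x hx
    by_cases h2 : l₂ x ≠ 0
    · exact aux_one_le_rank _ 0 0 (by simpa using h2)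
    by_cases h1 : l₁ x ≠ 0
    · exact aux_one_le_rank _ 0 1 (by simpa using h1)
    by_cases h0 : l₀ x ≠ 0
    · exact aux_one_le_rank _ 0 2 (by simpa using h0)
    by_cases h3 : l₃ x ≠ 0
    · exact aux_one_le_rank _ 0 5 (by simpa using h3)
    by_cases h4 : l₄ x ≠ 0
    · exact aux_one_le_rank _ 1 2 (by simpa using h4)
    push_neg at h0 h1 h2 h3 h4
    exact absurd (key x h0 h1 h2 h3 h4) hx
  · intro x
    rw [aux_rank_le_one]
    constructor
    · intro h
      have e1 := h 0 3
      have e2 := h 1 4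
      have e3 := h 2 5
      simp [aux_cons5, mul_self_eq_zero] at e1 e2 e3
      exact ⟨e2, e1, by rw [sq]; linear_combination -e3⟩
    · rintro ⟨h1, h2, h3⟩
      intro i j
      fin_cases i <;> fin_cases j <;>
        simp [h1, h2, Matrix.cons_val_succ, aux_cons5] <;>
        first
          | linear_combination h3 | linear_combination -h3
          | linear_combination 2 * h3 | linear_combination -2 * h3 | ring
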